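/- For every integer a ≥ 2, one has 1/a = 1 + cf([c_1,...,c_{a-1}]), where c_j = (−1)^j · 2 for 1 ≤ j ≤ a−1 (i.e. the alternating sequence −2, 2, −2, ..., ±2 of length a−1). -/

import Mathlib

/-- Continued fraction value of a list of rationals:
`cf [n₁,...,n_k] = 1/(n₁ + 1/(n₂ + ... + 1/n_k))`. -/
def cf : List ℚ → ℚ
  | [] => 0
  | n :: L => 1 / (n + cf L)

lemma cf_alt (n : ℕ) :
    cf ((List.range n).map (fun j => (-1 : ℚ) ^ (j + 1) * 2)) = -(n : ℚ) / (n + 1) ∧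
    cf ((List.range n).map (fun j => (-1 : ℚ) ^ j * 2)) = (n : ℚ) / (n + 1) := by
  induction n with
  | zero => simp [cf]
  | succ n ih =>
    obtain ⟨ih1, ih0⟩ := ih
    have h1 : ((List.range (n+1)).map (fun j => (-1 : ℚ) ^ (j + 1) * 2)) =
        ((-1 : ℚ) ^ (0 + 1) * 2) :: (List.range n).map (fun j => (-1 : ℚ) ^ j * 2) := by
      rw [List.range_succ_eq_map, List.map_cons, List.map_map]
      congr 1
      apply List.map_congr_left
      intro j _
      simp [pow_succ, Function.comp]
      try ring
    have h0 : ((List.range (n+1)).map (fun j => (-1 : ℚ) ^ j * 2)) =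
        ((-1 : ℚ) ^ 0 * 2) :: (List.range n).map (fun j => (-1 : ℚ) ^ (j + 1) * 2) := by
      rw [List.range_succ_eq_map, List.map_cons, List.map_map]
      congr 1
    have hne : (n : ℚ) + 1 ≠ 0 := by positivity
    constructor
    · rw [h1, cf, ih0]
      push_cast
      rw [div_eq_div_iff]
      · field_simp
        ring
      · intro h
        apply hne
        field_simp at h
        linarith
      · positivity
    · rw [h0, cf, ih1]
      push_cast
      rw [div_eq_div_iff]
      · field_simp
        ring
      · intro h
        apply hne
        field_simp at h
        linarith
      · positivity

/-- For every integer `a ≥ 2`,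
`1/a = 1 + cf [c₁, ..., c_(a-1)]` where `c_j = (-1)^j * 2`. -/
theorem one_div_eq_one_add_cf_altSeq (a : ℤ) (ha : 2 ≤ a) :
    (1 : ℚ) / (a : ℚ) =
      1 + cf ((List.range (a - 1).toNat).map (fun j => (-1 : ℚ) ^ (j + 1) * 2)) := by
  rw [(cf_alt _).1]
  have h : ((a - 1).toNat : ℚ) = (a : ℚ) - 1 := by
    have h2 : ((a - 1).toNat : ℤ) = a - 1 := Int.toNat_of_nonneg (by omega)
    rw [show ((a - 1).toNat : ℚ) = (((a - 1).toNat : ℤ) : ℚ) by push_cast; ring, h2]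
    push_cast
    ring
  rw [h]
  have ha' : (a : ℚ) ≠ 0 := by
    have : (2 : ℚ) ≤ (a : ℚ) := by exact_mod_cast ha
    linarith
  field_simp
  rw [sub_add_cancel, mul_add, mul_neg, mul_div_cancel₀ _ ha']
  ring
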